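/- arXiv:2511.12094 — 2 statements merged into one kernel-verified Lean document; each statement's English description precedes it below -/
import Mathlib

section
/- Let J be a bounded open interval, x₀ ∈ J̄, and f ∈ W^{1,2}(J) nonvanishing on J̄ with f(x₀)=1. Define f₁(x) = f(x)·∫_{x₀}^x dt/f²(t). Then f₁ ∈ W^{1,2}(J) and the modified Wronskian f·f₁' − f'·f₁ is identically equal to 1 on J. -/
open MeasureTheory Set intervalIntegral

lemma triangle_swap {a x : ℝ} (hax : a ≤ x) {u v : ℝ → ℝ}
    (hu : MeasureTheory.IntegrableOn u (Set.Ioc a x))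
    (hv : MeasureTheory.IntegrableOn v (Set.Ioc a x)) :
    (∫ s in a..x, u s * (∫ t in a..s, v t)) = ∫ t in a..x, v t * (∫ s in t..x, u s) := by
  set μ := volume.restrict (Ioc a x) with hμ
  have hS : MeasurableSet {p : ℝ × ℝ | p.2 ≤ p.1} := measurableSet_le measurable_snd measurable_fst
  have hF : Integrable ({p : ℝ × ℝ | p.2 ≤ p.1}.indicator fun p => u p.1 * v p.2) (μ.prod μ) :=
    (hu.mul_prod hv).indicator hS
  have hswap := integral_integral_swap
    (f := fun s t => ({p : ℝ × ℝ | p.2 ≤ p.1}.indicator fun p => u p.1 * v p.2) (s, t))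
    (μ := μ) (ν := μ) hF
  calc (∫ s in a..x, u s * (∫ t in a..s, v t))
      = ∫ s, (∫ t, ({p : ℝ × ℝ | p.2 ≤ p.1}.indicator fun p => u p.1 * v p.2) (s, t) ∂μ) ∂μ := by
        rw [intervalIntegral.integral_of_le hax, hμ]
        refine (setIntegral_congr_fun measurableSet_Ioc fun s hs => ?_).symm
        have h1 : (fun t => ({p : ℝ × ℝ | p.2 ≤ p.1}.indicator fun p => u p.1 * v p.2) (s, t))
            = (Iic s).indicator (fun t => u s * v t) := by
          ext t; by_cases h : t ≤ s <;> simp [Set.indicator_apply, h]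
        rw [h1, MeasureTheory.integral_indicator measurableSet_Iic,
          Measure.restrict_restrict measurableSet_Iic]
        have h2 : Iic s ∩ Ioc a x = Ioc a s := by
          ext t
          exact ⟨fun ⟨h1, h2, _⟩ => ⟨h2, h1⟩, fun ⟨h1', h2'⟩ => ⟨h2', h1', h2'.trans hs.2⟩⟩
        rw [h2, MeasureTheory.integral_const_mul, intervalIntegral.integral_of_le hs.1.le]
    _ = ∫ t, (∫ s, ({p : ℝ × ℝ | p.2 ≤ p.1}.indicator fun p => u p.1 * v p.2) (s, t) ∂μ) ∂μ :=
        hswap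
    _ = ∫ t in a..x, v t * (∫ s in t..x, u s) := by
        rw [intervalIntegral.integral_of_le hax, hμ]
        refine setIntegral_congr_fun measurableSet_Ioc fun t ht => ?_
        have h1 : (fun s => ({p : ℝ × ℝ | p.2 ≤ p.1}.indicator fun p => u p.1 * v p.2) (s, t))
            = (Ici t).indicator (fun s => u s * v t) := by
          ext s; by_cases h : t ≤ s <;> simp [Set.indicator_apply, h]
        rw [h1, MeasureTheory.integral_indicator measurableSet_Ici,
          Measure.restrict_restrict measurableSet_Ici]
        have h2 : Ici t ∩ Ioc a x = Icc t x := by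
          ext s
          exact ⟨fun ⟨h1', h2', h3'⟩ => ⟨h1', h3'⟩, fun ⟨h1', h2'⟩ => ⟨h1', ht.1.trans_le h1', h2'⟩⟩
        rw [h2, MeasureTheory.integral_Icc_eq_integral_Ioc, MeasureTheory.integral_mul_const,
          intervalIntegral.integral_of_le ht.2, mul_comm]

lemma ftc_aux (a b x₀ : ℝ) (hab : a ≤ b) (hx₀ : x₀ ∈ Icc a b) (f f' g : ℝ → ℝ)
    (hf'int : IntervalIntegrable f' volume a b)
    (hfrep : ∀ y ∈ Icc a b, f y = f a + ∫ t in a..y, f' t)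
    (hgc : ContinuousOn g (Icc a b))
    (hfg : ∀ t ∈ Icc a b, g t * f t = (f t)⁻¹)
    (hinvc : ContinuousOn (fun t => (f t)⁻¹) (Icc a b))
    (x : ℝ) (hx : x ∈ Icc a b) :
    f x * (∫ t in x₀..x, g t)
      = f a * (∫ t in x₀..a, g t)
        + ∫ s in a..x, (f' s * (∫ t in x₀..s, g t) + (f s)⁻¹) := by
  have hIcc : uIcc a b = Icc a b := uIcc_of_le hab
  have haI : a ∈ Icc a b := ⟨le_rfl, hab⟩
  have hsub : ∀ c ∈ Icc a b, ∀ d ∈ Icc a b, uIcc c d ⊆ Icc a b := by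
    intro c hc d hd; rw [← hIcc] at hc hd ⊢; exact uIcc_subset_uIcc hc hd
  have hgsub : ∀ c ∈ Icc a b, ∀ d ∈ Icc a b, IntervalIntegrable g volume c d :=
    fun c hc d hd => (hgc.mono (hsub c hc d hd)).intervalIntegrable
  have hf'sub : ∀ c ∈ Icc a b, ∀ d ∈ Icc a b, IntervalIntegrable f' volume c d :=
    fun c hc d hd => hf'int.mono_set (by rw [hIcc]; exact hsub c hc d hd)
  have hax : a ≤ x := hx.1
  have huIax : uIcc a x ⊆ Icc a b := hsub a haI x hx
  have hGdiff : ∀ s ∈ Icc a b,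
      (∫ t in a..s, g t) = (∫ t in x₀..s, g t) - (∫ t in x₀..a, g t) := by
    intro s hs
    have h := integral_add_adjacent_intervals (hgsub x₀ hx₀ a haI) (hgsub a haI s hs)
    linarith
  have hfd : ∀ s ∈ Icc a b, (∫ t in a..s, f' t) = f s - f a := fun s hs => by
    rw [hfrep s hs]; ring
  have htx : ∀ t ∈ uIcc a x, (∫ s in t..x, f' s) = f x - f t := by
    intro t ht
    have h1 := integral_add_adjacent_intervals (hf'sub a haI t (huIax ht)) (hf'sub t (huIax ht) x hx)
    have h2 := hfd x hx
    have h3 := hfd t (huIax ht)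
    linarith
  have hprim : ContinuousOn (fun s => ∫ t in a..s, g t) (uIcc a x) :=
    continuousOn_primitive_interval' (hgsub a haI x hx) left_mem_uIcc
  have hGax : ContinuousOn (fun y => ∫ t in x₀..y, g t) (uIcc a x) := by
    have h1 : ContinuousOn (fun y => (∫ t in x₀..a, g t) + ∫ t in a..y, g t) (uIcc a x) :=
      continuousOn_const.add hprim
    exact h1.congr fun y hy => by dsimp only; rw [hGdiff y (huIax hy)]; ring
  have hf'ax := hf'sub a haI x hx
  have hint1 : IntervalIntegrable (fun s => f' s * ∫ t in x₀..s, g t) volume a x :=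
    hf'ax.mul_continuousOn hGax
  have hint2 : IntervalIntegrable (fun s => (f s)⁻¹) volume a x :=
    (hinvc.mono huIax).intervalIntegrable
  have hswap := triangle_swap hax hf'ax.1 (hgsub a haI x hx).1
  have e1 : (∫ s in a..x, f' s * ∫ t in x₀..s, g t)
      = (∫ s in a..x, f' s * (∫ t in x₀..a, g t))
        + ∫ s in a..x, f' s * (∫ t in a..s, g t) := by
    rw [← integral_add (hf'ax.mul_const _) (hf'ax.mul_continuousOn hprim)]
    apply integral_congr
    intro s hs
    show f' s * (∫ t in x₀..s, g t)
      = f' s * (∫ t in x₀..a, g t) + f' s * ∫ t in a..s, g t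
    rw [hGdiff s (huIax hs)]; ring
  have e2 : (∫ t in a..x, g t * (∫ s in t..x, f' s)) = ∫ t in a..x, (f x * g t - (f t)⁻¹) := by
    apply integral_congr
    intro t ht
    show g t * (∫ s in t..x, f' s) = f x * g t - (f t)⁻¹
    rw [htx t ht, ← hfg t (huIax ht)]; ring
  rw [integral_add hint1 hint2, e1, hswap, e2,
    integral_sub ((hgsub a haI x hx).const_mul (f x)) hint2,
    intervalIntegral.integral_mul_const, intervalIntegral.integral_const_mul,
    hfd x hx, hGdiff x hx]
  ring

/-- `g ∈ W^{1,2}(a,b)` with (a concrete representative of) distributional derivative `g'`. -/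
def IsW12 (a b : ℝ) (g g' : ℝ → ℝ) : Prop :=
  MemLp g 2 (volume.restrict (Set.Ioo a b)) ∧
  MemLp g' 2 (volume.restrict (Set.Ioo a b)) ∧
  IntervalIntegrable g' MeasureTheory.volume a b ∧
  ∀ x ∈ Set.Icc a b, g x = g a + ∫ t in a..x, g' t

/-- for `f ∈ W^{1,2}` nonvanishing on `[a,b]` with `f x₀ = 1`, the Abel
solution `f₁(x) = f(x)·∫_{x₀}^x dt/f²(t)` belongs to `W^{1,2}(a,b)` (with derivative
`f₁' = f'·∫_{x₀}^x 1/f² + 1/f`) and the modified Wronskian `f·f₁' − f'·f₁` is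
identically `1` on `J̄`. -/
theorem stmt5 (a b x₀ : ℝ) (hab : a < b) (hx₀ : x₀ ∈ Icc a b) (f f' : ℝ → ℝ)
    (hf : IsW12 a b f f') (hne : ∀ x ∈ Icc a b, f x ≠ 0) (hnorm : f x₀ = 1) :
    IsW12 a b (fun x => f x * ∫ t in x₀..x, (f t ^ 2)⁻¹)
      (fun x => f' x * (∫ t in x₀..x, (f t ^ 2)⁻¹) + (f x)⁻¹) ∧
    ∀ x ∈ Icc a b,
      f x * (f' x * (∫ t in x₀..x, (f t ^ 2)⁻¹) + (f x)⁻¹)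
        - f' x * (f x * ∫ t in x₀..x, (f t ^ 2)⁻¹) = 1 := by
  obtain ⟨hfL2, hf'L2, hf'int, hfrep⟩ := hf
  have hIcc : uIcc a b = Icc a b := uIcc_of_le hab.le
  have haI : a ∈ Icc a b := ⟨le_rfl, hab.le⟩
  have hfc : ContinuousOn f (Icc a b) := by
    have h1 : ContinuousOn (fun y => f a + ∫ t in a..y, f' t) (Icc a b) := by
      apply continuousOn_const.add
      have := continuousOn_primitive_interval' hf'int left_mem_uIcc
      rwa [hIcc] at this
    exact h1.congr fun y hy => hfrep y hy
  have hgc : ContinuousOn (fun t => (f t ^ 2)⁻¹) (Icc a b) :=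
    (hfc.pow 2).inv₀ fun t ht => pow_ne_zero 2 (hne t ht)
  have hinvc : ContinuousOn (fun t => (f t)⁻¹) (Icc a b) := hfc.inv₀ hne
  have hsub : ∀ c ∈ Icc a b, ∀ d ∈ Icc a b, uIcc c d ⊆ Icc a b := by
    intro c hc d hd; rw [← hIcc] at hc hd ⊢; exact uIcc_subset_uIcc hc hd
  have hgsub : ∀ c ∈ Icc a b, ∀ d ∈ Icc a b,
      IntervalIntegrable (fun t => (f t ^ 2)⁻¹) volume c d :=
    fun c hc d hd => (hgc.mono (hsub c hc d hd)).intervalIntegrable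
  have hGc : ContinuousOn (fun y => ∫ t in x₀..y, (f t ^ 2)⁻¹) (Icc a b) := by
    have h1 : ContinuousOn
        (fun y => (∫ t in x₀..a, (f t ^ 2)⁻¹) + ∫ t in a..y, (f t ^ 2)⁻¹) (Icc a b) := by
      apply continuousOn_const.add
      have := continuousOn_primitive_interval' (hgsub a haI b ⟨hab.le, le_rfl⟩) left_mem_uIcc
      rwa [hIcc] at this
    refine h1.congr fun y hy => ?_
    show (∫ t in x₀..y, (f t ^ 2)⁻¹)
      = (∫ t in x₀..a, (f t ^ 2)⁻¹) + ∫ t in a..y, (f t ^ 2)⁻¹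
    have h := integral_add_adjacent_intervals (hgsub x₀ hx₀ a haI) (hgsub a haI y hy)
    linarith
  obtain ⟨C, hC⟩ := isCompact_Icc.exists_bound_of_continuousOn hGc
  obtain ⟨M, hM⟩ := isCompact_Icc.exists_bound_of_continuousOn hinvc
  have hGm : AEStronglyMeasurable (fun y => ∫ t in x₀..y, (f t ^ 2)⁻¹)
      (volume.restrict (Ioo a b)) :=
    (hGc.mono Ioo_subset_Icc_self).aestronglyMeasurable measurableSet_Ioo
  have hinvm : AEStronglyMeasurable (fun y => (f y)⁻¹) (volume.restrict (Ioo a b)) :=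
    (hinvc.mono Ioo_subset_Icc_self).aestronglyMeasurable measurableSet_Ioo
  haveI : IsFiniteMeasure (volume.restrict (Ioo a b)) :=
    ⟨by rw [Measure.restrict_apply_univ, Real.volume_Ioo]; exact ENNReal.ofReal_lt_top⟩
  have hae := ae_restrict_mem (μ := volume) (measurableSet_Ioo (a := a) (b := b))
  refine ⟨⟨?_, ?_, ?_, ?_⟩, ?_⟩
  · refine hfL2.of_le_mul (c := C) (hfL2.1.mul hGm) ?_
    filter_upwards [hae] with y hy
    rw [norm_mul, mul_comm]
    exact mul_le_mul_of_nonneg_right (hC y (Ioo_subset_Icc_self hy)) (norm_nonneg _)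
  · refine MemLp.add ?_ ?_
    · refine hf'L2.of_le_mul (c := C) (hf'L2.1.mul hGm) ?_
      filter_upwards [hae] with y hy
      rw [norm_mul, mul_comm]
      exact mul_le_mul_of_nonneg_right (hC y (Ioo_subset_Icc_self hy)) (norm_nonneg _)
    · refine (memLp_const (1 : ℝ)).of_le_mul (c := M) hinvm ?_
      filter_upwards [hae] with y hy
      simpa using hM y (Ioo_subset_Icc_self hy)
  · exact (hf'int.mul_continuousOn (by rw [hIcc]; exact hGc)).add
      (ContinuousOn.intervalIntegrable (by rw [hIcc]; exact hinvc))
  · intro x hx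
    have := ftc_aux a b x₀ hab.le hx₀ f f' (fun t => (f t ^ 2)⁻¹) hf'int hfrep hgc
      (fun t ht => by
        have h := hne t ht
        field_simp) hinvc x hx
    exact this
  · intro x hx
    have h := hne x hx
    field_simp
    ring
end

section
/- Let J be a bounded interval, f ∈ W^{1,2}(J) nonvanishing, and define the formal powers φ_f^{(2k)} = (2k)!·f·X̃^{(2k)} and φ_f^{(2k+1)} = (2k+1)!·f·X^{(2k+1)} via the recursive integrals. Then for every ρ ∈ ℂ, the series Σ_{k=0}^∞ (iρ)^k φ_f^{(k)}(x)/k! converges absolutely and uniformly for x in J̄ and uniformly for ρ in every compact subset of ℂ. -/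
open MeasureTheory Set intervalIntegral Filter
open scoped Interval

/-- with formal powers `φ_f^{(2k)} = (2k)!·f·X̃^{(2k)}`,
`φ_f^{(2k+1)} = (2k+1)!·f·X^{(2k+1)}` built from the recursive integrals of a
nonvanishing `f ∈ W^{1,2}`, the SPPS series `Σ (iρ)^k φ_f^{(k)}(x)/k!` converges
absolutely and uniformly for `x ∈ J̄` and uniformly for `ρ` in every compact subset
of `ℂ`. -/
theorem stmt7 (a b x₀ : ℝ) (hab : a < b) (hx₀ : x₀ ∈ Icc a b)
    (f : ℝ → ℝ) (hcont : ContinuousOn f (Icc a b))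
    (hne : ∀ x ∈ Icc a b, f x ≠ 0)
    (X Xt : ℕ → ℝ → ℝ) (φ : ℕ → ℝ → ℝ)
    (hX0 : ∀ x, X 0 x = 1) (hXt0 : ∀ x, Xt 0 x = 1)
    (hX : ∀ k, 1 ≤ k → ∀ x,
      X k x = ∫ s in x₀..x, X (k - 1) s * (if Odd k then (f s ^ 2)⁻¹ else f s ^ 2))
    (hXt : ∀ k, 1 ≤ k → ∀ x,
      Xt k x = ∫ s in x₀..x, Xt (k - 1) s * (if Odd k then f s ^ 2 else (f s ^ 2)⁻¹))
    (hφ : ∀ k x, φ k x = (k.factorial : ℝ) * f x * (if Even k then Xt k x else X k x)) :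
    ∀ K : Set ℂ, IsCompact K →
      (∀ ρ ∈ K, ∀ x ∈ Icc a b,
        Summable (fun k : ℕ =>
          ‖(Complex.I * ρ) ^ k * ((φ k x : ℝ) : ℂ) / ((k.factorial : ℕ) : ℂ)‖)) ∧
      TendstoUniformlyOn
        (fun n (q : ℂ × ℝ) => ∑ k ∈ Finset.range n,
          (Complex.I * q.1) ^ k * ((φ k q.2 : ℝ) : ℂ) / ((k.factorial : ℕ) : ℂ))
        (fun q => ∑' k : ℕ,
          (Complex.I * q.1) ^ k * ((φ k q.2 : ℝ) : ℂ) / ((k.factorial : ℕ) : ℂ))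
        atTop (K ×ˢ Icc a b) := by
  intro K hK
  -- bounds on f², f⁻², f
  have hIcc : uIcc a b = Icc a b := uIcc_of_le hab.le
  have hcont2 : ContinuousOn (fun s => f s ^ 2) (Icc a b) := (hcont.pow 2)
  have hconti : ContinuousOn (fun s => (f s ^ 2)⁻¹) (Icc a b) :=
    hcont2.inv₀ (fun s hs => pow_ne_zero _ (hne s hs))
  obtain ⟨C₁, hC₁⟩ := isCompact_Icc.exists_bound_of_continuousOn hcont2
  obtain ⟨C₂, hC₂⟩ := isCompact_Icc.exists_bound_of_continuousOn hconti
  obtain ⟨Mf, hMf⟩ := isCompact_Icc.exists_bound_of_continuousOn hcont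
  set C : ℝ := max 0 (max C₁ C₂) with hC
  have hC0 : 0 ≤ C := le_max_left _ _
  have hCb : ∀ s ∈ Icc a b, |f s ^ 2| ≤ C ∧ |(f s ^ 2)⁻¹| ≤ C := by
    intro s hs
    constructor
    · exact le_trans (hC₁ s hs) (le_trans (le_max_left _ _) (le_max_right _ _))
    · exact le_trans (hC₂ s hs) (le_trans (le_max_right _ _) (le_max_right _ _))
  have hMf0 : 0 ≤ Mf := le_trans (norm_nonneg _) (hMf x₀ hx₀)
  -- generic step
  have step : ∀ (Y w : ℝ → ℝ) (k : ℕ), ContinuousOn Y (Icc a b) →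
      ContinuousOn w (Icc a b) →
      (∀ s ∈ Icc a b, |Y s| ≤ C ^ k * |s - x₀| ^ k / k.factorial) →
      (∀ s ∈ Icc a b, |w s| ≤ C) →
      ContinuousOn (fun x => ∫ s in x₀..x, Y s * w s) (Icc a b) ∧
      ∀ x ∈ Icc a b, |∫ s in x₀..x, Y s * w s| ≤
        C ^ (k + 1) * |x - x₀| ^ (k + 1) / (k + 1).factorial := by
    intro Y w k hY hw hYb hwb
    have hch : ContinuousOn (fun s => Y s * w s) (Icc a b) := hY.mul hw
    have hint : IntervalIntegrable (fun s => Y s * w s) volume a b :=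
      (hch.mono (by rw [hIcc])).intervalIntegrable
    constructor
    · have := continuousOn_primitive_interval' hint (by rw [hIcc]; exact hx₀)
      rwa [hIcc] at this
    · intro x hx
      have hsub : uIcc x₀ x ⊆ Icc a b := uIcc_subset_Icc hx₀ hx
      have hi : IntervalIntegrable (fun s => Y s * w s) volume x₀ x :=
        (hch.mono hsub).intervalIntegrable
      have hi' : IntegrableOn (fun s => ‖Y s * w s‖) (Ι x₀ x) volume :=
        (intervalIntegrable_iff.mp hi).norm
      have hg : IntegrableOn (fun s => C ^ (k + 1) / k.factorial * |s - x₀| ^ k)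
          (Ι x₀ x) volume := by
        apply Continuous.integrableOn_Ioc
        exact continuous_const.mul ((continuous_id.sub continuous_const).abs.pow k)
      have hfac : (0:ℝ) < k.factorial := by positivity
      calc |∫ s in x₀..x, Y s * w s|
          ≤ ∫ s in Ι x₀ x, ‖Y s * w s‖ := by
            rw [← Real.norm_eq_abs]; exact norm_integral_le_integral_norm_uIoc
        _ ≤ ∫ s in Ι x₀ x, C ^ (k + 1) / k.factorial * |s - x₀| ^ k := by
            apply setIntegral_mono_on hi' hg measurableSet_uIoc
            intro s hs
            have hs' : s ∈ Icc a b := hsub (uIoc_subset_uIcc hs)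
            have h1 := hYb s hs'
            have h2 := hwb s hs'
            have : ‖Y s * w s‖ = |Y s| * |w s| := by
              rw [Real.norm_eq_abs, abs_mul]
            rw [this]
            calc |Y s| * |w s| ≤ (C ^ k * |s - x₀| ^ k / k.factorial) * C := by
                  apply mul_le_mul h1 h2 (abs_nonneg _)
                  positivity
              _ = C ^ (k + 1) / k.factorial * |s - x₀| ^ k := by ring
        _ = C ^ (k + 1) / k.factorial * (|x - x₀| ^ (k + 1) / ((k:ℝ) + 1)) := by
            rw [MeasureTheory.integral_const_mul, integral_pow_abs_sub_uIoc]
        _ = C ^ (k + 1) * |x - x₀| ^ (k + 1) / (k + 1).factorial := by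
            rw [Nat.factorial_succ, div_mul_div_comm]
            push_cast
            ring
  -- weight functions
  have hwcont : ∀ k : ℕ, ContinuousOn
      (fun s => if Odd k then (f s ^ 2)⁻¹ else f s ^ 2) (Icc a b) := by
    intro k; split_ifs <;> assumption
  have hwcont' : ∀ k : ℕ, ContinuousOn
      (fun s => if Odd k then f s ^ 2 else (f s ^ 2)⁻¹) (Icc a b) := by
    intro k; split_ifs <;> assumption
  have hwb : ∀ k : ℕ, ∀ s ∈ Icc a b,
      |if Odd k then (f s ^ 2)⁻¹ else f s ^ 2| ≤ C := by
    intro k s hs; split_ifs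
    exacts [(hCb s hs).2, (hCb s hs).1]
  have hwb' : ∀ k : ℕ, ∀ s ∈ Icc a b,
      |if Odd k then f s ^ 2 else (f s ^ 2)⁻¹| ≤ C := by
    intro k s hs; split_ifs
    exacts [(hCb s hs).1, (hCb s hs).2]
  -- main induction
  have key : ∀ k : ℕ,
      (ContinuousOn (X k) (Icc a b) ∧
        ∀ x ∈ Icc a b, |X k x| ≤ C ^ k * |x - x₀| ^ k / k.factorial) ∧
      (ContinuousOn (Xt k) (Icc a b) ∧
        ∀ x ∈ Icc a b, |Xt k x| ≤ C ^ k * |x - x₀| ^ k / k.factorial) := by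
    intro k
    induction k with
    | zero =>
      have e1 : X 0 = fun _ => (1:ℝ) := funext hX0
      have e2 : Xt 0 = fun _ => (1:ℝ) := funext hXt0
      refine ⟨⟨?_, ?_⟩, ⟨?_, ?_⟩⟩
      · rw [e1]; exact continuousOn_const
      · intro x hx; simp [hX0]
      · rw [e2]; exact continuousOn_const
      · intro x hx; simp [hXt0]
    | succ k ih =>
      have eX : X (k + 1) = fun x => ∫ s in x₀..x,
          X k s * (if Odd (k+1) then (f s ^ 2)⁻¹ else f s ^ 2) := by
        funext x; simpa using hX (k + 1) (Nat.le_add_left 1 k) x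
      have eXt : Xt (k + 1) = fun x => ∫ s in x₀..x,
          Xt k s * (if Odd (k+1) then f s ^ 2 else (f s ^ 2)⁻¹) := by
        funext x; simpa using hXt (k + 1) (Nat.le_add_left 1 k) x
      have s1 := step (X k) _ k ih.1.1 (hwcont (k+1)) ih.1.2 (hwb (k+1))
      have s2 := step (Xt k) _ k ih.2.1 (hwcont' (k+1)) ih.2.2 (hwb' (k+1))
      rw [eX, eXt]
      exact ⟨s1, s2⟩
  -- bound on φ
  have hdist : ∀ x ∈ Icc a b, |x - x₀| ≤ b - a := by
    intro x hx
    obtain ⟨h1, h2⟩ := hx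
    obtain ⟨h3, h4⟩ := hx₀
    rw [abs_sub_le_iff]
    constructor <;> linarith
  have hφb : ∀ k : ℕ, ∀ x ∈ Icc a b, |φ k x| ≤ Mf * (C * (b - a)) ^ k := by
    intro k x hx
    have hY : |if Even k then Xt k x else X k x| ≤ C ^ k * (b - a) ^ k / k.factorial := by
      have hmono : C ^ k * |x - x₀| ^ k / k.factorial ≤ C ^ k * (b - a) ^ k / k.factorial := by
        gcongr
        exact hdist x hx
      split_ifs
      · exact le_trans ((key k).2.2 x hx) hmono
      · exact le_trans ((key k).1.2 x hx) hmono
    have hfac : (0:ℝ) < k.factorial := by positivity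
    rw [hφ]
    rw [abs_mul, abs_mul, abs_of_nonneg hfac.le]
    calc (k.factorial : ℝ) * |f x| * |if Even k then Xt k x else X k x|
        ≤ (k.factorial : ℝ) * Mf * (C ^ k * (b - a) ^ k / k.factorial) := by
          apply mul_le_mul _ hY (abs_nonneg _) (by positivity)
          exact mul_le_mul_of_nonneg_left (hMf x hx) hfac.le
      _ = Mf * (C ^ k * (b - a) ^ k) * ((k.factorial : ℝ) / k.factorial) := by ring
      _ = Mf * (C * (b - a)) ^ k := by
          rw [div_self hfac.ne', mul_one, mul_pow]
  -- bound on K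
  obtain ⟨R, hR0, hR⟩ : ∃ R : ℝ, 0 ≤ R ∧ ∀ ρ ∈ K, ‖ρ‖ ≤ R := by
    obtain ⟨R, hR⟩ := hK.isBounded.exists_norm_le
    exact ⟨max 0 R, le_max_left _ _, fun ρ hρ => le_trans (hR ρ hρ) (le_max_right _ _)⟩
  set u : ℕ → ℝ := fun k => Mf * ((R * (C * (b - a))) ^ k / k.factorial) with hu_def
  have hu : Summable u := (Real.summable_pow_div_factorial _).mul_left Mf
  have hbound : ∀ (k : ℕ) (q : ℂ × ℝ), q ∈ K ×ˢ Icc a b →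
      ‖(Complex.I * q.1) ^ k * ((φ k q.2 : ℝ) : ℂ) / ((k.factorial : ℕ) : ℂ)‖ ≤ u k := by
    intro k q hq
    obtain ⟨hq1, hq2⟩ := hq
    have hfac : (0:ℝ) < k.factorial := by positivity
    have hnorm : ‖(Complex.I * q.1) ^ k * ((φ k q.2 : ℝ) : ℂ) / ((k.factorial : ℕ) : ℂ)‖
        = ‖q.1‖ ^ k * |φ k q.2| / k.factorial := by
      rw [norm_div, norm_mul, norm_pow, norm_mul, Complex.norm_I, one_mul,
        Complex.norm_real, Complex.norm_natCast, Real.norm_eq_abs]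
    rw [hnorm, hu_def]
    have h1 : ‖q.1‖ ^ k * |φ k q.2| ≤ R ^ k * (Mf * (C * (b - a)) ^ k) := by
      apply mul_le_mul (pow_le_pow_left₀ (norm_nonneg _) (hR q.1 hq1) k)
        (hφb k q.2 hq2) (abs_nonneg _) (by positivity)
    calc ‖q.1‖ ^ k * |φ k q.2| / k.factorial
        ≤ R ^ k * (Mf * (C * (b - a)) ^ k) / k.factorial := by gcongr
      _ = Mf * ((R * (C * (b - a))) ^ k / k.factorial) := by
          simp only [mul_pow]; ring
  constructor
  · intro ρ hρ x hx
    exact Summable.of_nonneg_of_le (fun k => norm_nonneg _)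
      (fun k => hbound k (ρ, x) (mem_prod.mpr ⟨hρ, hx⟩)) hu
  · exact tendstoUniformlyOn_tsum_nat hu hbound
end
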